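/- Let Q : ℝⁿ → ℝ be L-smooth, h : ℝⁿ → ℝ ∪ {+∞} proper closed convex, μ > 0 with μL ≤ 1/4, and let z, x ∈ ℝⁿ, e ∈ ℝⁿ. Define x⁺ := prox_{μh}(z − μ(∇Q(x) + e)). Then Q(x⁺) + h(x⁺) + (1/(2μ))‖x⁺ − z‖² ≤ Q(x) + h(x) + (1/(2μ))‖x − z‖² − ((2μ)⁻¹ − L)/2 · ‖x⁺ − x‖² + μ‖e‖². -/

import Mathlib

open scoped RealInnerProductSpace

section Aux

variable {n : ℕ}

/-- Smoothness descent lemma: if `∇Q` is `L`-Lipschitz then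
`Q y ≤ Q x + ⟪∇Q x, y - x⟫ + L/2 ‖y - x‖²`. -/
lemma descent_lemma {n : ℕ} (Q : EuclideanSpace ℝ (Fin n) → ℝ)
    (gradQ : EuclideanSpace ℝ (Fin n) → EuclideanSpace ℝ (Fin n)) (L : ℝ)
    (hQ : ∀ x, HasGradientAt Q (gradQ x) x)
    (hQL : ∀ x y, ‖gradQ x - gradQ y‖ ≤ L * ‖x - y‖)
    (x y : EuclideanSpace ℝ (Fin n)) :
    Q y ≤ Q x + ⟪gradQ x, y - x⟫ + L / 2 * ‖y - x‖ ^ 2 := by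
  set d : EuclideanSpace ℝ (Fin n) := y - x with hd
  set φ : ℝ → ℝ := fun t => Q (x + t • d) - t * ⟪gradQ x, d⟫ - t ^ 2 * (L / 2 * ‖d‖ ^ 2)
    with hφ
  have hline : ∀ t : ℝ, HasDerivAt (fun s : ℝ => x + s • d) d t := by
    intro t
    simpa using ((hasDerivAt_id t).smul_const d).const_add x
  have hQd : ∀ t : ℝ, HasDerivAt (fun s : ℝ => Q (x + s • d)) ⟪gradQ (x + t • d), d⟫ t := by
    intro t
    have h1 := (hQ (x + t • d)).hasFDerivAt.comp_hasDerivAt t (hline t)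
    simp at h1; exact h1
  have hφd : ∀ t : ℝ, HasDerivAt φ
      (⟪gradQ (x + t • d), d⟫ - ⟪gradQ x, d⟫ - t * (L * ‖d‖ ^ 2)) t := by
    intro t
    have h1 : HasDerivAt (fun s : ℝ => s * ⟪gradQ x, d⟫) ⟪gradQ x, d⟫ t := by
      simpa using (hasDerivAt_id t).mul_const ⟪gradQ x, d⟫
    have h2 : HasDerivAt (fun s : ℝ => s ^ 2 * (L / 2 * ‖d‖ ^ 2))
        (2 * t * (L / 2 * ‖d‖ ^ 2)) t := by
      have := (hasDerivAt_pow 2 t).mul_const (L / 2 * ‖d‖ ^ 2)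
      simpa using this
    have := ((hQd t).sub h1).sub h2
    rw [show t * (L * ‖d‖ ^ 2) = 2 * t * (L / 2 * ‖d‖ ^ 2) by ring]
    exact this
  have hanti : AntitoneOn φ (Set.Icc (0 : ℝ) 1) := by
    apply antitoneOn_of_deriv_nonpos (convex_Icc 0 1)
    · exact fun t _ => ((hφd t).continuousAt).continuousWithinAt
    · exact fun t _ => ((hφd t).differentiableAt).differentiableWithinAt
    · intro t ht
      rw [interior_Icc] at ht
      rw [(hφd t).deriv]
      have h1 : ⟪gradQ (x + t • d) - gradQ x, d⟫ ≤ ‖gradQ (x + t • d) - gradQ x‖ * ‖d‖ :=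
        real_inner_le_norm _ _
      have h2 : ‖gradQ (x + t • d) - gradQ x‖ ≤ L * ‖t • d‖ := by
        simpa using hQL (x + t • d) x
      have h3 : ‖t • d‖ = t * ‖d‖ := by
        rw [norm_smul, Real.norm_eq_abs, abs_of_pos ht.1]
      have h4 : ⟪gradQ (x + t • d) - gradQ x, d⟫ = ⟪gradQ (x + t • d), d⟫ - ⟪gradQ x, d⟫ :=
        inner_sub_left _ _ _
      have hdnn : (0 : ℝ) ≤ ‖d‖ := norm_nonneg _
      rw [h3] at h2
      nlinarith [mul_le_mul_of_nonneg_right h2 hdnn, h1, h4]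
  have h01 := hanti (Set.left_mem_Icc.2 zero_le_one) (Set.right_mem_Icc.2 zero_le_one)
    zero_le_one
  have h0 : φ 0 = Q x := by simp [hφ]
  have h1 : φ 1 = Q y - ⟪gradQ x, d⟫ - L / 2 * ‖d‖ ^ 2 := by
    simp [hφ, hd]
  rw [h0, h1] at h01
  linarith

end Aux

set_option maxHeartbeats 1000000 in
/-- One-step descent of the stochastic proximal-gradient update
`x⁺ = prox_{μh}(z − μ(∇Q(x) + e))`:
`Q(x⁺) + h(x⁺) + (1/(2μ))‖x⁺ − z‖² ≤ Q(x) + h(x) + (1/(2μ))‖x − z‖²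
  − ((2μ)⁻¹ − L)/2 ‖x⁺ − x‖² + μ‖e‖²`. -/
theorem stmt14 {n : ℕ} (Q h : EuclideanSpace ℝ (Fin n) → ℝ)
    (gradQ : EuclideanSpace ℝ (Fin n) → EuclideanSpace ℝ (Fin n)) (L μ : ℝ)
    (hL : 0 ≤ L) (hμ : 0 < μ) (hμL : μ * L ≤ 1 / 4)
    (hQ : ∀ x, HasGradientAt Q (gradQ x) x)
    (hQL : ∀ x y, ‖gradQ x - gradQ y‖ ≤ L * ‖x - y‖)
    (hh : ConvexOn ℝ Set.univ h) (hhclosed : LowerSemicontinuous h)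
    (z x e xp : EuclideanSpace ℝ (Fin n))
    (hxp : ∀ y, h xp + 1 / (2 * μ) * ‖xp - (z - μ • (gradQ x + e))‖ ^ 2 ≤
      h y + 1 / (2 * μ) * ‖y - (z - μ • (gradQ x + e))‖ ^ 2) :
    Q xp + h xp + 1 / (2 * μ) * ‖xp - z‖ ^ 2 ≤
      Q x + h x + 1 / (2 * μ) * ‖x - z‖ ^ 2 -
        ((2 * μ)⁻¹ - L) / 2 * ‖xp - x‖ ^ 2 + μ * ‖e‖ ^ 2 := by
  set w : EuclideanSpace ℝ (Fin n) := z - μ • (gradQ x + e) with hw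
  -- Step 1: subgradient-type inequality from prox optimality
  have key : (1 / μ) * ⟪w - xp, x - xp⟫ ≤ h x - h xp := by
    have hε : ∀ ε : ℝ, 0 < ε → (1 / μ) * ⟪w - xp, x - xp⟫ ≤ h x - h xp + ε := by
      intro ε hε
      by_cases hxx : x = xp
      · simp [hxx]; linarith
      · have hnorm : (0 : ℝ) < ‖x - xp‖ ^ 2 := by
          have h0 : x - xp ≠ 0 := sub_ne_zero.2 hxx
          exact pow_pos (norm_pos_iff.2 h0) 2
        set t : ℝ := min 1 (ε * (2 * μ) / ‖x - xp‖ ^ 2) with ht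
        have ht0 : 0 < t := by
          apply lt_min one_pos
          exact div_pos (mul_pos hε (by positivity)) hnorm
        have ht1 : t ≤ 1 := min_le_left _ _
        have htε : t * ‖x - xp‖ ^ 2 ≤ ε * (2 * μ) := by
          have h1 : t ≤ ε * (2 * μ) / ‖x - xp‖ ^ 2 := min_le_right _ _
          calc t * ‖x - xp‖ ^ 2 ≤ (ε * (2 * μ) / ‖x - xp‖ ^ 2) * ‖x - xp‖ ^ 2 :=
                mul_le_mul_of_nonneg_right h1 (le_of_lt hnorm)
            _ = ε * (2 * μ) := div_mul_cancel₀ _ (ne_of_gt hnorm)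
        set y : EuclideanSpace ℝ (Fin n) := xp + t • (x - xp) with hy
        have hconv : h y ≤ (1 - t) * h xp + t * h x := by
          have := hh.2 (Set.mem_univ xp) (Set.mem_univ x)
            (by linarith : (0:ℝ) ≤ 1 - t) (le_of_lt ht0) (by ring)
          have heq : (1 - t) • xp + t • x = y := by
            rw [hy]
            module
          rwa [heq] at this
        have hopt := hxp y
        have hynorm : ‖y - w‖ ^ 2 = ‖xp - w‖ ^ 2 + 2 * (t * ⟪xp - w, x - xp⟫)
            + t ^ 2 * ‖x - xp‖ ^ 2 := by
          have heq : y - w = (xp - w) + t • (x - xp) := by rw [hy]; abel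
          rw [heq, norm_add_sq_real, real_inner_smul_right, norm_smul, mul_pow]
          simp [Real.norm_eq_abs, sq_abs]
        rw [hynorm] at hopt
        -- hopt : h xp + 1/(2μ)‖xp-w‖² ≤ h y + 1/(2μ)(‖xp-w‖² + 2t⟪xp-w,x-xp⟫ + t²‖x-xp‖²)
        have hstep : 0 ≤ t * (h x - h xp) + 1 / (2 * μ) *
            (2 * (t * ⟪xp - w, x - xp⟫) + t ^ 2 * ‖x - xp‖ ^ 2) := by
          have h2μ : (0:ℝ) < 1 / (2 * μ) := by positivity
          nlinarith [hopt, hconv]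
        have hdiv : 0 ≤ (h x - h xp) + (1 / μ) * ⟪xp - w, x - xp⟫
            + t / (2 * μ) * ‖x - xp‖ ^ 2 := by
          have := div_nonneg (le_of_lt ht0) (le_of_lt ht0)
          have h2 : 0 ≤ (1 / t) * (t * (h x - h xp) + 1 / (2 * μ) *
              (2 * (t * ⟪xp - w, x - xp⟫) + t ^ 2 * ‖x - xp‖ ^ 2)) :=
            mul_nonneg (by positivity) hstep
          have ht0' : t ≠ 0 := ne_of_gt ht0
          calc (0:ℝ) ≤ _ := h2
            _ = (h x - h xp) + (1 / μ) * ⟪xp - w, x - xp⟫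
                + t / (2 * μ) * ‖x - xp‖ ^ 2 := by
              field_simp
              ring
        have hsmall : t / (2 * μ) * ‖x - xp‖ ^ 2 ≤ ε := by
          rw [div_mul_eq_mul_div, div_le_iff₀ (by positivity : (0:ℝ) < 2 * μ)]
          linarith [htε]
        have hinner : ⟪w - xp, x - xp⟫ = -⟪xp - w, x - xp⟫ := by
          rw [← inner_neg_left]
          congr 1
          abel
        rw [hinner]
        have hμ' : (0:ℝ) < 1 / μ := by positivity
        nlinarith [hdiv, hsmall]
    by_contra hlt
    push_neg at hlt
    have := hε (((1 / μ) * ⟪w - xp, x - xp⟫ - (h x - h xp)) / 2) (by linarith)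
    linarith
  -- Step 2: smoothness descent
  have hdesc : Q xp ≤ Q x + ⟪gradQ x, xp - x⟫ + L / 2 * ‖xp - x‖ ^ 2 :=
    descent_lemma Q gradQ L hQ hQL x xp
  -- Step 3: expand the inner product in key
  have hexp : ⟪w - xp, x - xp⟫ = ⟪z - xp, x - xp⟫ - μ * (⟪gradQ x, x - xp⟫ + ⟪e, x - xp⟫) := by
    have : w - xp = (z - xp) - μ • (gradQ x + e) := by rw [hw]; abel
    rw [this, inner_sub_left, real_inner_smul_left, inner_add_left]
  -- Step 4: the three-point identity
  have hid : 2 * ⟪z - xp, x - xp⟫ = ‖xp - z‖ ^ 2 + ‖xp - x‖ ^ 2 - ‖x - z‖ ^ 2 := by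
    have h1 : ‖(xp - z) - (xp - x)‖ ^ 2
        = ‖xp - z‖ ^ 2 - 2 * ⟪xp - z, xp - x⟫ + ‖xp - x‖ ^ 2 := norm_sub_sq_real _ _
    have h2 : (xp - z) - (xp - x) = x - z := by abel
    have h3 : ⟪z - xp, x - xp⟫ = ⟪xp - z, xp - x⟫ := by
      rw [show z - xp = -(xp - z) by abel, show x - xp = -(xp - x) by abel, inner_neg_neg]
    rw [h2] at h1
    rw [h3]
    linarith
  -- Step 5: Young's inequality, multiplied by 4μ
  have hyoung4 : 4 * μ * ⟪e, x - xp⟫ ≤ 4 * μ ^ 2 * ‖e‖ ^ 2 + ‖xp - x‖ ^ 2 := by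
    have h1 : ⟪e, x - xp⟫ ≤ ‖e‖ * ‖x - xp‖ := real_inner_le_norm _ _
    have h2 : ‖x - xp‖ = ‖xp - x‖ := by rw [← norm_neg]; congr 1; abel
    rw [h2] at h1
    nlinarith [sq_nonneg (2 * μ * ‖e‖ - ‖xp - x‖),
      mul_le_mul_of_nonneg_left h1 (by positivity : (0:ℝ) ≤ 4 * μ)]
  -- Step 6: combine everything
  have hgsym : ⟪gradQ x, xp - x⟫ = -⟪gradQ x, x - xp⟫ := by
    rw [← inner_neg_right]; congr 1; abel
  rw [hexp] at key
  rw [hgsym] at hdesc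
  have hμne : μ ≠ 0 := ne_of_gt hμ
  have key2 : ⟪z - xp, x - xp⟫ - μ * (⟪gradQ x, x - xp⟫ + ⟪e, x - xp⟫)
      ≤ μ * (h x - h xp) := by
    have h0 := mul_le_mul_of_nonneg_left key hμ.le
    have heq : μ * (1 / μ * (⟪z - xp, x - xp⟫
        - μ * (⟪gradQ x, x - xp⟫ + ⟪e, x - xp⟫)))
        = ⟪z - xp, x - xp⟫ - μ * (⟪gradQ x, x - xp⟫ + ⟪e, x - xp⟫) := by
      field_simp
    linarith [h0, heq.le, heq.ge]
  have hdescμ := mul_le_mul_of_nonneg_left hdesc hμ.le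
  have hcoef : ((2 * μ)⁻¹ - L) / 2 = 1 / (4 * μ) - L / 2 := by
    field_simp
    ring
  rw [hcoef]
  have h4μ : (0:ℝ) < 4 * μ := by positivity
  apply le_of_mul_le_mul_left ?_ h4μ
  have hL1 : 4 * μ * (Q xp + h xp + 1 / (2 * μ) * ‖xp - z‖ ^ 2)
      = 4 * μ * Q xp + 4 * μ * h xp + 2 * ‖xp - z‖ ^ 2 := by
    field_simp
    ring
  have hR1 : 4 * μ * (Q x + h x + 1 / (2 * μ) * ‖x - z‖ ^ 2
        - (1 / (4 * μ) - L / 2) * ‖xp - x‖ ^ 2 + μ * ‖e‖ ^ 2)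
      = 4 * μ * Q x + 4 * μ * h x + 2 * ‖x - z‖ ^ 2 - ‖xp - x‖ ^ 2
        + 2 * μ * L * ‖xp - x‖ ^ 2 + 4 * μ ^ 2 * ‖e‖ ^ 2 := by
    field_simp
    ring
  rw [hL1, hR1]
  linarith [key2, hid, hdescμ, hyoung4]
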